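/- With r_j = −j(z+j) and p = (1,0,0,...), the monic polynomial p_j(x) = x^j + Σ_{k=1}^{j} r_j r_{j−1} ⋯ r_{j−k+1} · (1/k!) · x^{j−k} equals (−1)^j j! L_j^{(z)}(x), where L_j^{(z)} is the associated Laguerre polynomial; equivalently, p_j(x) = Σ_{k=0}^{j} (−1)^{j−k} binom(z+j, z+k) binom(j, k) ⋅ (j!/k!) ⋅ x^k. -/

import Mathlib

open Finset

/-- With `r_j = -j(z+j)` and `p = (1, 0, 0, …)` (so `s_{(k)}(p) = 1/k!`), the monic
polynomial `p_j(x) = x^j + Σ_{k=1}^j r_j r_{j-1} ⋯ r_{j-k+1} (1/k!) x^{j-k}` equals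
`(-1)^j j! L_j^{(z)}(x)` where `L_j^{(z)}` is the associated Laguerre polynomial
`L_j^{(z)}(x) = Σ_{k=0}^j (-1)^k binom(j+z, j-k) x^k / k!` (with the generalized
binomial coefficient `binom(j+z, m) = (∏_{i=0}^{m-1} (j+z-i)) / m!`). -/
theorem laguerre_case {F : Type*} [Field F] [CharZero F] (z : F) (j : ℕ) (x : F) :
    x ^ j +
      ∑ k ∈ Finset.Icc 1 j,
        (∏ m ∈ Finset.range k,
            (-(((j - m : ℕ) : F)) * (z + ((j - m : ℕ) : F)))) *
          (1 / (Nat.factorial k : F)) * x ^ (j - k) =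
    (-1) ^ j * (Nat.factorial j : F) *
      ∑ k ∈ Finset.range (j + 1),
        (-1) ^ k *
          ((∏ i ∈ Finset.range (j - k), ((j : F) + z - (i : F))) /
            (Nat.factorial (j - k) : F)) * x ^ k / (Nat.factorial k : F) := by
  have hins : Finset.range (j + 1) = insert 0 (Finset.Icc 1 j) := by
    ext a
    simp only [Finset.mem_range, Finset.mem_insert, Finset.mem_Icc]
    omega
  rw [← Finset.sum_range_reflect, Finset.mul_sum, hins,
    Finset.sum_insert (by simp : (0 : ℕ) ∉ Finset.Icc 1 j)]
  congr 1
  · have hj : j + 1 - 1 - 0 = j := by omega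
    have hsq : ((-1 : F)) ^ j * (-1) ^ j = 1 := by
      rw [← pow_add, ← two_mul, pow_mul]
      norm_num
    have hj0 : ((Nat.factorial j : F)) ≠ 0 := Nat.cast_ne_zero.mpr j.factorial_ne_zero
    rw [hj]
    simp only [Nat.sub_self, Finset.range_zero, Finset.prod_empty, Nat.factorial_zero,
      Nat.cast_one, div_one, pow_zero]
    field_simp
    linear_combination (-(x ^ j)) * hsq
  refine Finset.sum_congr rfl fun k hk => ?_
  have hkj : k ≤ j := (Finset.mem_Icc.mp hk).2
  have h1 : j + 1 - 1 - k = j - k := by omega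
  have h2 : j - (j - k) = k := by omega
  rw [h1, h2]
  have hdesc : (∏ m ∈ Finset.range k, ((j - m : ℕ) : F)) = (j.descFactorial k : F) := by
    rw [Nat.descFactorial_eq_prod_range]
    push_cast
    rfl
  have hprod : (∏ m ∈ Finset.range k,
      (-(((j - m : ℕ) : F)) * (z + ((j - m : ℕ) : F))))
      = (-1) ^ k * ((j.descFactorial k : F) *
          ∏ i ∈ Finset.range k, ((j : F) + z - (i : F))) := by
    have hstep : ∀ m ∈ Finset.range k,
        (-(((j - m : ℕ) : F)) * (z + ((j - m : ℕ) : F)))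
        = (-1) * (((j - m : ℕ) : F) * ((j : F) + z - (m : F))) := by
      intro m hm
      have hmj : m ≤ j := le_trans (le_of_lt (Finset.mem_range.mp hm)) hkj
      rw [Nat.cast_sub hmj]
      ring
    rw [Finset.prod_congr rfl hstep, Finset.prod_mul_distrib, Finset.prod_mul_distrib,
      Finset.prod_const, hdesc, Finset.card_range]
  rw [hprod]
  have hfac : ((Nat.factorial (j - k) : F)) * (j.descFactorial k : F)
      = (Nat.factorial j : F) := by
    exact_mod_cast congrArg (Nat.cast : ℕ → F) (Nat.factorial_mul_descFactorial hkj)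
  have key : ((-1 : F)) ^ j * (-1) ^ (j - k) = (-1) ^ k := by
    rw [← pow_add, show j + (j - k) = 2 * (j - k) + k by omega, pow_add, pow_mul]
    norm_num
  have hk0 : ((Nat.factorial k : F)) ≠ 0 := Nat.cast_ne_zero.mpr k.factorial_ne_zero
  have hjk0 : ((Nat.factorial (j - k) : F)) ≠ 0 :=
    Nat.cast_ne_zero.mpr (j - k).factorial_ne_zero
  rw [← hfac]
  field_simp
  linear_combination (-((j.descFactorial k : F) *
      (∏ i ∈ Finset.range k, ((j : F) + z - (i : F))) * x ^ (j - k))) * key
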